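/- Let d, m1, m2 be positive integers with m1 ≥ m2 and d ≥ m1 + m2. Then the sequence (1,2,...,d+1) is m1-reducible, its m1-reduction is (1,2,...,d+1−m1, d+1−m1, ..., d+1−m1) with d+1−m1 repeated m1+1 times; this resulting sequence is m2-reducible, with m2-reduction (1,2,...,d+1−m1,...,d+3−m1−m2, d+2−m1−m2, d+1−m1−m2) where d+1−m1 appears at least once. -/

import Mathlib

/-- One pass of the Reduction Algorithm with parameter `m`, acting on the last
`m` entries of the sequence, listed in reverse order (i.e. from `a_m` down to
`a_1`), with `Z` the set of still available reducers.  At each step the reducer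
is `a` itself if `a < m` and `a ≤ max Z`, and otherwise `max Z`; the algorithm
fails (`none`) if the chosen reducer is no longer available. -/
def redAux (m : ℕ) : List ℕ → Finset ℕ → Option (List ℕ)
  | [], _ => some []
  | a :: rest, Z =>
    let z := Z.max.getD 0
    let r := if a < m ∧ a ≤ z then a else z
    if r ∈ Z then
      (redAux m rest (Z.erase r)).map (fun cs => (a - r) :: cs)
    else
      none

lemma redAux_cons (m a j : ℕ) (L : List ℕ) (hj : 1 ≤ j) (ha : j ≤ a) :
    redAux m (a :: L) (Finset.Icc 1 j) =
      (redAux m L (Finset.Icc 1 (j - 1))).map (fun cs => (a - j) :: cs) := by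
  have hmax : (Finset.Icc 1 j).max = (j : ℕ) := by
    apply le_antisymm
    · exact Finset.max_le fun x hx => by
        simp only [Finset.mem_Icc] at hx
        exact WithBot.coe_le_coe.mpr hx.2
    · exact Finset.le_max (by simp [Finset.mem_Icc, hj])
  have herase : (Finset.Icc 1 j).erase j = Finset.Icc 1 (j - 1) := by
    rw [Finset.Icc_erase_right]
    ext x
    simp only [Finset.mem_Ico, Finset.mem_Icc]
    omega
  have hgd : (Finset.Icc 1 j).max.getD 0 = j := by rw [hmax]; rfl
  rw [redAux]
  simp only [hgd, herase]
  have hr : (if a < m ∧ a ≤ j then a else j) = j := by split <;> omega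
  rw [hr, if_pos (by simp [Finset.mem_Icc, hj]), herase]

lemma redAux_desc (m : ℕ) : ∀ (n s j : ℕ), n ≤ j → j ≤ s + n →
    redAux m ((List.range' (s + 1) n).reverse) (Finset.Icc 1 j) =
      some (List.replicate n (s + n - j))
  | 0, s, j, _, _ => by simp [redAux]
  | n + 1, s, j, h1, h2 => by
    rw [List.range'_concat, List.reverse_append, List.reverse_singleton,
      List.singleton_append, show s + 1 + 1 * n = s + n + 1 by omega,
      redAux_cons m _ j _ (by omega) (by omega),
      redAux_desc m n s (j - 1) (by omega) (by omega)]
    have e1 : s + n + 1 - j = s + (n + 1) - j := by omega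
    have e2 : s + n - (j - 1) = s + (n + 1) - j := by omega
    rw [e1, e2, List.replicate_succ]; rfl


lemma redAux_const (m : ℕ) : ∀ (n j a : ℕ), n ≤ j → j ≤ a →
    redAux m (List.replicate n a) (Finset.Icc 1 j) = some (List.range' (a - j) n)
  | 0, _, _, _, _ => by simp [redAux]
  | n + 1, j, a, h1, h2 => by
    rw [List.replicate_succ, redAux_cons m a j _ (by omega) h2,
      redAux_const m n (j - 1) a (by omega) (by omega)]
    have e2 : a - (j - 1) = a - j + 1 := by omega
    rw [e2, List.range'_succ]; rfl

/-- The Reduction Algorithm with parameter `m` applied to a sequence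
`S = (b_1, …, b_k, a_1, …, a_m)`.  Returns `some` of the `m`-reduction
`(b_1, …, b_k, c_1, …, c_m)` if `S` is `m`-reducible, and `none` otherwise
(in particular if `S` is shorter than `m`). -/
def mReduction (m : ℕ) (S : List ℕ) : Option (List ℕ) :=
  if m ≤ S.length then
    (redAux m (S.drop (S.length - m)).reverse (Finset.Icc 1 m)).map
      (fun cs => S.take (S.length - m) ++ cs.reverse)
  else
    none

lemma range'_split (s p q : ℕ) :
    List.range' s (p + q) = List.range' s p ++ List.range' (s + p) q := by
  have := @List.range'_append s p q 1
  simp [Nat.add_comm] at this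
  simpa [Nat.add_comm] using this.symm

lemma drop_len_eq {α} (l1 l2 : List α) (n : ℕ) (h : n = l1.length) :
    (l1 ++ l2).drop n = l2 := by subst h; exact List.drop_left ..

lemma take_len_eq {α} (l1 l2 : List α) (n : ℕ) (h : n = l1.length) :
    (l1 ++ l2).take n = l1 := by subst h; exact List.take_left ..

/-- First step of the proof of Theorem 3.3 (marcin-kryterium): for positive
integers `m1 ≥ m2` with `d ≥ m1 + m2`, the sequence `(1, 2, …, d+1)` is
`m1`-reducible with `m1`-reduction `(1, …, d−m1)` followed by `m1+1` copies of
`d+1−m1`; and the latter sequence is `m2`-reducible, with `m2`-reduction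
`(1, …, d−m1, d+1−m1, …, d+1−m1, d−m1, d−1−m1, …, d+1−m1−m2)` in which the
entry `d+1−m1` still appears (at least) `m1+1−m2 ≥ 1` times. -/
theorem first_reductions (d m1 m2 : ℕ)
    (hm2 : 0 < m2) (hm12 : m2 ≤ m1) (hd : m1 + m2 ≤ d) :
    mReduction m1 (List.range' 1 (d + 1)) =
      some (List.range' 1 (d - m1) ++ List.replicate (m1 + 1) (d + 1 - m1)) ∧
    mReduction m2
        (List.range' 1 (d - m1) ++ List.replicate (m1 + 1) (d + 1 - m1)) =
      some (List.range' 1 (d - m1) ++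
        List.replicate (m1 + 1 - m2) (d + 1 - m1) ++
        (List.range' (d + 1 - m1 - m2) m2).reverse) ∧
    1 ≤ m1 + 1 - m2 := by
  refine ⟨?_, ?_, by omega⟩
  · rw [mReduction, List.length_range']
    rw [if_pos (by omega)]
    rw [show List.range' 1 (d + 1)
        = List.range' 1 (d + 1 - m1) ++ List.range' ((d + 1 - m1) + 1) m1 from by
      rw [show (d + 1 - m1) + 1 = 1 + (d + 1 - m1) from by omega, ← range'_split]
      congr 1; omega]
    rw [drop_len_eq _ _ _ (by simp), take_len_eq _ _ _ (by simp)]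
    rw [redAux_desc m1 m1 (d + 1 - m1) m1 le_rfl (by omega)]
    simp only [Option.map_some, List.length_range', List.reverse_replicate]
    rw [show d + 1 - m1 + m1 - m1 = d + 1 - m1 from by omega]
    rw [show d + 1 - m1 = (d - m1) + 1 from by omega, List.range'_concat]
    rw [show 1 + 1 * (d - m1) = (d - m1) + 1 from by omega]
    simp only [List.append_assoc, List.singleton_append, ← List.replicate_succ]
  · rw [show List.replicate (m1 + 1) (d + 1 - m1)
        = List.replicate (m1 + 1 - m2) (d + 1 - m1)
            ++ List.replicate m2 (d + 1 - m1) from by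
      rw [← List.replicate_add]; congr 1; omega]
    rw [← List.append_assoc, mReduction]
    rw [List.length_append, List.length_append, List.length_range',
      List.length_replicate, List.length_replicate]
    rw [if_pos (by omega)]
    rw [drop_len_eq _ _ _ (by
        simp only [List.length_append, List.length_range', List.length_replicate]; omega),
      take_len_eq _ _ _ (by
        simp only [List.length_append, List.length_range', List.length_replicate]; omega),
      List.reverse_replicate]
    rw [redAux_const m2 m2 m2 (d + 1 - m1) le_rfl (by omega)]
    simp only [Option.map_some, List.append_assoc]
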